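/- For each j ≥ 0, the set N°_j = {S ∈ 𝒮 : (S,j) is an arbitrage node and S_{j+1} ≠ S_j} is a conditionally null set at every node (S,k) with 0 ≤ k ≤ j, i.e., Ī_k(1_{N°_j})(S) = 0. Consequently the countable union N_k = ∪_{j≥k} N°_j is also conditionally null at every (S,k). -/

import Mathlib

open Filter Set
open scoped Classical ENNReal

noncomputable section

abbrev Traj := ℕ → ℝ

/-- Portfolio value `Π^{V,H}_{j,n}`. -/
def PiVal (j n : ℕ) (V : ℝ) (H : ℕ → Traj → ℝ) (y : Traj) : ℝ :=
  V + ∑ i ∈ Finset.Ico j n, H i y * (y (i + 1) - y i)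

/-- Non-anticipativity of a sequence of functions on a set of trajectories. -/
def NonAnticipOn (A : Set Traj) (H : ℕ → Traj → ℝ) : Prop :=
  ∀ i, ∀ x ∈ A, ∀ y ∈ A, (∀ k ≤ i, x k = y k) → H i x = H i y

/-- Non-anticipativity (at time `j`) of a single extended-real-valued function. -/
def NonAnticipF (A : Set Traj) (j : ℕ) (g : Traj → EReal) : Prop :=
  ∀ x ∈ A, ∀ y ∈ A, (∀ k ≤ j, x k = y k) → g x = g y

/-- Conditional space `𝒮_{(x,j)}`. -/
def Cond (𝒮 : Set Traj) (x : Traj) (j : ℕ) : Set Traj :=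
  {y ∈ 𝒮 | ∀ i ≤ j, y i = x i}

/-- `liminf_{n→∞} Π^{V,H}_{j,n}` as a value in `[0,∞]`. -/
def limInfVal (j : ℕ) (V : ℝ) (H : ℕ → Traj → ℝ) (y : Traj) : ℝ≥0∞ :=
  Filter.liminf (fun n => ENNReal.ofReal (PiVal j n V H y)) Filter.atTop

/-- The conditional null operator `Ī_j` on a set `A` of trajectories. -/
def IUpOn (A : Set Traj) (j : ℕ) (f : Traj → ℝ≥0∞) : ℝ≥0∞ :=
  sInf { c | ∃ (V : ℕ → ℝ) (H : ℕ → ℕ → Traj → ℝ),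
    (∀ m, NonAnticipOn A (H m)) ∧
    (∀ m n, ∀ y ∈ A, 0 ≤ PiVal j n (V m) (H m) y) ∧
    (∀ y ∈ A, f y ≤ ∑' m, limInfVal j (V m) (H m) y) ∧
    c = ∑' m, ENNReal.ofReal (V m) }

/-- `Ī_j f (x)`, conditioned on the node `(x,j)`. -/
def IUp (𝒮 : Set Traj) (j : ℕ) (f : Traj → ℝ≥0∞) (x : Traj) : ℝ≥0∞ :=
  IUpOn (Cond 𝒮 x j) j f

/-- The conditional superhedging outer integral on a set `A`, starting at time `j`. -/
def sigmaUpOn (A : Set Traj) (j : ℕ) (f : Traj → EReal) : EReal :=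
  sInf { c : EReal | ∃ (V0 : ℝ) (H0 : ℕ → Traj → ℝ) (n0 : ℕ) (V : ℕ → ℝ)
      (H : ℕ → ℕ → Traj → ℝ),
    NonAnticipOn A H0 ∧ (∀ m, NonAnticipOn A (H m)) ∧
    (∀ m n, ∀ y ∈ A, 0 ≤ PiVal j n (V m) (H m) y) ∧
    (∀ y ∈ A, f y ≤ (PiVal j n0 V0 H0 y : EReal) +
      ((∑' m, limInfVal j (V m) (H m) y : ℝ≥0∞) : EReal)) ∧
    c = (V0 : EReal) + ((∑' m, ENNReal.ofReal (V m) : ℝ≥0∞) : EReal) }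

/-- `σ̄_j f (x)`. -/
def sigmaUp (𝒮 : Set Traj) (j : ℕ) (f : Traj → EReal) (x : Traj) : EReal :=
  sigmaUpOn (Cond 𝒮 x j) j f

/-- `σ̲_j f (x) = -σ̄_j (-f)(x)`. -/
def sigmaDown (𝒮 : Set Traj) (j : ℕ) (f : Traj → EReal) (x : Traj) : EReal :=
  - sigmaUp 𝒮 j (fun y => - f y) x

/-- A set is `Ī`-null. -/
def NullSet (𝒮 : Set Traj) (E : Set Traj) : Prop :=
  IUpOn 𝒮 0 (fun y => if y ∈ E then 1 else 0) = 0

/-- A property holds `Ī`-almost everywhere on `𝒮`. -/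
def AEOn (𝒮 : Set Traj) (P : Traj → Prop) : Prop :=
  NullSet 𝒮 {y ∈ 𝒮 | ¬ P y}

/-- Property `(L_{(x,j)})`, continuity from below at the node `(x,j)`. -/
def PropL (𝒮 : Set Traj) (x : Traj) (j : ℕ) : Prop :=
  ∀ (V0 : ℝ) (H0 : ℕ → Traj → ℝ) (n0 : ℕ) (V : ℕ → ℝ) (H : ℕ → ℕ → Traj → ℝ),
    NonAnticipOn (Cond 𝒮 x j) H0 → (∀ m, NonAnticipOn (Cond 𝒮 x j) (H m)) →
    (∀ m n, ∀ y ∈ Cond 𝒮 x j, 0 ≤ PiVal j n (V m) (H m) y) →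
    (∀ y ∈ Cond 𝒮 x j, (PiVal j n0 V0 H0 y : EReal) ≤
      ((∑' m, limInfVal j (V m) (H m) y : ℝ≥0∞) : EReal)) →
    (V0 : EReal) ≤ ((∑' m, ENNReal.ofReal (V m) : ℝ≥0∞) : EReal)

/-- Assumption `(L)`-a.e. -/
def LaeAssumption (𝒮 : Set Traj) : Prop :=
  (∀ x ∈ 𝒮, PropL 𝒮 x 0) ∧ NullSet 𝒮 {x ∈ 𝒮 | ∃ j, ¬ PropL 𝒮 x j}

/-- Up-down node. -/
def UpDownNode (𝒮 : Set Traj) (x : Traj) (j : ℕ) : Prop :=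
  (∃ y ∈ Cond 𝒮 x j, x j < y (j + 1)) ∧ (∃ y ∈ Cond 𝒮 x j, y (j + 1) < x j)

/-- Flat node. -/
def FlatNode (𝒮 : Set Traj) (x : Traj) (j : ℕ) : Prop :=
  ∀ y ∈ Cond 𝒮 x j, y (j + 1) = x j

/-- Arbitrage node. -/
def ArbitrageNode (𝒮 : Set Traj) (x : Traj) (j : ℕ) : Prop :=
  ¬ UpDownNode 𝒮 x j ∧ ¬ FlatNode 𝒮 x j

/-- Type II arbitrage node. -/
def TypeIINode (𝒮 : Set Traj) (x : Traj) (j : ℕ) : Prop :=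
  ArbitrageNode 𝒮 x j ∧ ¬ ∃ y ∈ Cond 𝒮 x j, y (j + 1) = x j

/-- Trajectory based stopping time. -/
def StoppingTime (𝒮 : Set Traj) (τ : Traj → ℕ∞) : Prop :=
  ∀ x ∈ 𝒮, ∀ y ∈ 𝒮, (∀ k : ℕ, (k : ℕ∞) ≤ τ x → x k = y k) → τ x = τ y

/-- `⊤`-dominant addition on `EReal`, implementing the convention `∞ + (−∞) = ∞`. -/
def eadd (a b : EReal) : EReal := if a = ⊤ ∨ b = ⊤ then ⊤ else a + b

/-- Subtraction `u − v = u + (−v)` with the convention `∞ + (−∞) = ∞`. -/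
def esub (a b : EReal) : EReal := eadd a (-b)

/-- Supermartingale. -/
def TrajSupermartingale (𝒮 : Set Traj) (f : ℕ → Traj → EReal) : Prop :=
  (∀ j, NonAnticipF 𝒮 j (f j)) ∧
  ∀ j, AEOn 𝒮 (fun x => sigmaUp 𝒮 j (f (j + 1)) x ≤ f j x)

/-- The arbitrage-node betting strategy at time `t`. -/
def Hstrat (𝒮 : Set Traj) (t : ℕ) : ℕ → Traj → ℝ :=
  fun i y => if i = t ∧ ArbitrageNode 𝒮 y t then
    (if ∃ z ∈ Cond 𝒮 y t, y t < z (t + 1) then (1:ℝ) else -1) else 0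

lemma cond_congr (𝒮 : Set Traj) {x y : Traj} {t : ℕ} (h : ∀ k ≤ t, x k = y k) :
    Cond 𝒮 x t = Cond 𝒮 y t := by
  ext z
  simp only [Cond, Set.mem_setOf_eq]
  exact and_congr_right fun _ => ⟨fun hz i hi => (hz i hi).trans (h i hi),
    fun hz i hi => (hz i hi).trans (h i hi).symm⟩

lemma hstrat_nonanticip (𝒮 : Set Traj) (t : ℕ) (A : Set Traj) :
    NonAnticipOn A (Hstrat 𝒮 t) := by
  intro i x _ y _ hxy
  unfold Hstrat
  rcases eq_or_ne i t with rfl | hne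
  · have hc : Cond 𝒮 x i = Cond 𝒮 y i := cond_congr 𝒮 hxy
    have hx : x i = y i := hxy i le_rfl
    have harb : ArbitrageNode 𝒮 x i ↔ ArbitrageNode 𝒮 y i := by
      unfold ArbitrageNode UpDownNode FlatNode
      rw [hc, hx]
    have hup : (∃ z ∈ Cond 𝒮 x i, x i < z (i + 1)) ↔
        (∃ z ∈ Cond 𝒮 y i, y i < z (i + 1)) := by rw [hc, hx]
    simp only [harb, hup]
  · simp [hne]

lemma hstrat_mul_nonneg (𝒮 : Set Traj) (t : ℕ) {y : Traj} (hy : y ∈ 𝒮) :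
    0 ≤ Hstrat 𝒮 t t y * (y (t + 1) - y t) := by
  have hyc : y ∈ Cond 𝒮 y t := ⟨hy, fun _ _ => rfl⟩
  unfold Hstrat
  by_cases harb : ArbitrageNode 𝒮 y t
  · by_cases hup : ∃ z ∈ Cond 𝒮 y t, y t < z (t + 1)
    · have hnd : ¬ ∃ z ∈ Cond 𝒮 y t, z (t + 1) < y t := fun hd => harb.1 ⟨hup, hd⟩
      have h1 : ¬ (y (t + 1) < y t) := fun h => hnd ⟨y, hyc, h⟩
      simp only [harb, hup, and_true, if_true, if_pos rfl]
      nlinarith [not_lt.mp h1]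
    · have h1 : ¬ (y t < y (t + 1)) := fun h => hup ⟨y, hyc, h⟩
      simp only [harb, hup, and_true, if_true, if_false, if_pos rfl]
      nlinarith [not_lt.mp h1]
  · simp [harb]

lemma hstrat_mul_pos (𝒮 : Set Traj) (t : ℕ) {y : Traj} (hy : y ∈ 𝒮)
    (harb : ArbitrageNode 𝒮 y t) (hne : y (t + 1) ≠ y t) :
    0 < Hstrat 𝒮 t t y * (y (t + 1) - y t) := by
  have h0 := hstrat_mul_nonneg 𝒮 t hy
  have hH : Hstrat 𝒮 t t y ≠ 0 := by
    unfold Hstrat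
    rw [if_pos ⟨rfl, harb⟩]
    split <;> norm_num
  have : Hstrat 𝒮 t t y * (y (t + 1) - y t) ≠ 0 :=
    mul_ne_zero hH (sub_ne_zero.mpr hne)
  exact lt_of_le_of_ne h0 (Ne.symm this)

lemma pival_hstrat (𝒮 : Set Traj) (t k n : ℕ) (y : Traj) :
    PiVal k n 0 (Hstrat 𝒮 t) y =
      if t ∈ Finset.Ico k n then Hstrat 𝒮 t t y * (y (t + 1) - y t) else 0 := by
  unfold PiVal
  rw [zero_add]
  by_cases ht : t ∈ Finset.Ico k n
  · rw [if_pos ht, Finset.sum_eq_single_of_mem t ht]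
    intro b _ hb
    simp [Hstrat, hb]
  · rw [if_neg ht, Finset.sum_eq_zero]
    intro b hb
    have hbt : b ≠ t := fun h => ht (h ▸ hb)
    simp [Hstrat, hbt]

lemma pival_hstrat_nonneg (𝒮 : Set Traj) (t k n : ℕ) {y : Traj} (hy : y ∈ 𝒮) :
    0 ≤ PiVal k n 0 (Hstrat 𝒮 t) y := by
  rw [pival_hstrat]
  split
  · exact hstrat_mul_nonneg 𝒮 t hy
  · exact le_rfl

lemma liminfval_hstrat (𝒮 : Set Traj) (t k : ℕ) (hk : k ≤ t) (y : Traj) :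
    limInfVal k 0 (Hstrat 𝒮 t) y =
      ENNReal.ofReal (Hstrat 𝒮 t t y * (y (t + 1) - y t)) := by
  unfold limInfVal
  have hev : ∀ᶠ n in Filter.atTop,
      ENNReal.ofReal (PiVal k n 0 (Hstrat 𝒮 t) y) =
      (fun _ : ℕ => ENNReal.ofReal (Hstrat 𝒮 t t y * (y (t + 1) - y t))) n := by
    filter_upwards [Filter.eventually_ge_atTop (t + 1)] with n hn
    rw [pival_hstrat, if_pos (Finset.mem_Ico.mpr ⟨hk, hn⟩)]
  rw [Filter.liminf_congr hev, Filter.liminf_const]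

lemma zero_mem_iupon (𝒮 : Set Traj) (x : Traj) (k : ℕ) (f : Traj → ℝ≥0∞)
    (T : ℕ → ℕ) (_hT : ∀ m, k ≤ T m)
    (hf : ∀ y ∈ Cond 𝒮 x k, f y ≤ ∑' m, limInfVal k 0 (Hstrat 𝒮 (T m)) y) :
    IUp 𝒮 k f x = 0 := by
  refine le_antisymm (sInf_le ?_) zero_le
  refine ⟨fun _ => 0, fun m => Hstrat 𝒮 (T m), fun m => hstrat_nonanticip 𝒮 (T m) _,
    fun m n y hy => pival_hstrat_nonneg 𝒮 (T m) k n hy.1, hf, by simp⟩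

theorem arbitrage_moves_are_null' (𝒮 : Set Traj) (j : ℕ) :
    (∀ k ≤ j, ∀ x ∈ 𝒮,
      IUp 𝒮 k
        (fun y => if y ∈ {z ∈ 𝒮 | ArbitrageNode 𝒮 z j ∧ z (j + 1) ≠ z j} then 1 else 0)
        x = 0) ∧
    (∀ k : ℕ, ∀ x ∈ 𝒮,
      IUp 𝒮 k
        (fun y => if y ∈ {z ∈ 𝒮 | ∃ i ≥ k, ArbitrageNode 𝒮 z i ∧ z (i + 1) ≠ z i}
          then 1 else 0) x = 0) := by
  constructor
  · intro k hk x _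
    refine zero_mem_iupon 𝒮 x k _ (fun _ => j) (fun _ => hk) ?_
    intro y hy
    by_cases hE : y ∈ {z ∈ 𝒮 | ArbitrageNode 𝒮 z j ∧ z (j + 1) ≠ z j}
    · rw [if_pos hE]
      obtain ⟨hy𝒮, harb, hne⟩ := hE
      have hpos := hstrat_mul_pos 𝒮 j hy𝒮 harb hne
      have hterm : limInfVal k 0 (Hstrat 𝒮 j) y ≠ 0 := by
        rw [liminfval_hstrat 𝒮 j k hk]
        simpa using hpos
      have : (∑' _ : ℕ, limInfVal k 0 (Hstrat 𝒮 j) y) = ⊤ :=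
        ENNReal.tsum_const_eq_top_of_ne_zero hterm
      rw [this]; exact le_top
    · rw [if_neg hE]; exact zero_le
  · intro k x _
    refine zero_mem_iupon 𝒮 x k _ (fun m => k + (Nat.unpair m).1)
      (fun _ => Nat.le_add_right _ _) ?_
    intro y hy
    by_cases hE : y ∈ {z ∈ 𝒮 | ∃ i ≥ k, ArbitrageNode 𝒮 z i ∧ z (i + 1) ≠ z i}
    · rw [if_pos hE]
      obtain ⟨hy𝒮, i, hik, harb, hne⟩ := hE
      have hinj : Function.Injective (fun l : ℕ => Nat.pair (i - k) l) := by
        intro a b hab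
        have := congrArg Nat.unpair hab
        simpa [Nat.unpair_pair] using this
      have hle := ENNReal.tsum_comp_le_tsum_of_injective hinj
        (fun m => limInfVal k 0 (Hstrat 𝒮 (k + (Nat.unpair m).1)) y)
      have heq : ∀ l : ℕ, limInfVal k 0
          (Hstrat 𝒮 (k + (Nat.unpair (Nat.pair (i - k) l)).1)) y =
          limInfVal k 0 (Hstrat 𝒮 i) y := by
        intro l
        rw [Nat.unpair_pair]
        simp [Nat.add_sub_cancel' hik]
      have hterm : limInfVal k 0 (Hstrat 𝒮 i) y ≠ 0 := by
        rw [liminfval_hstrat 𝒮 i k hik]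
        simpa using hstrat_mul_pos 𝒮 i hy𝒮 harb hne
      have htop : (∑' l : ℕ, limInfVal k 0
          (Hstrat 𝒮 (k + (Nat.unpair (Nat.pair (i - k) l)).1)) y) = ⊤ := by
        rw [tsum_congr heq]
        exact ENNReal.tsum_const_eq_top_of_ne_zero hterm
      have : (∑' m, limInfVal k 0 (Hstrat 𝒮 (k + (Nat.unpair m).1)) y) = ⊤ :=
        top_le_iff.mp (htop ▸ hle)
      rw [this]; exact le_top
    · rw [if_neg hE]; exact zero_le

/-- the set `N°_j` of trajectories moving at an arbitrage node at time `j`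
is conditionally null at every node `(S,k)` with `k ≤ j`, and the union
`N_k = ∪_{j ≥ k} N°_j` is conditionally null at every `(S,k)`. -/
theorem arbitrage_moves_are_null (𝒮 : Set Traj) (j : ℕ) :
    (∀ k ≤ j, ∀ x ∈ 𝒮,
      IUp 𝒮 k
        (fun y => if y ∈ {z ∈ 𝒮 | ArbitrageNode 𝒮 z j ∧ z (j + 1) ≠ z j} then 1 else 0)
        x = 0) ∧
    (∀ k : ℕ, ∀ x ∈ 𝒮,
      IUp 𝒮 k
        (fun y => if y ∈ {z ∈ 𝒮 | ∃ i ≥ k, ArbitrageNode 𝒮 z i ∧ z (i + 1) ≠ z i}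
          then 1 else 0) x = 0) := by
  exact arbitrage_moves_are_null' 𝒮 j

end
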